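/- arXiv:1802.04352 — 3 statements merged into one kernel-verified Lean document; each statement's English description precedes it below -/
import Mathlib

section
/- Let X ⊆ ℝ contain 0, have 0 as an accumulation point of X, and have an isolated point x ≠ 0. Then in the sphere H = {y ∈ E(X) : ‖y‖ = |x|}, the point (x, 0, 0, …) is isolated. -/
theorem stmt_10 (X : Set ℝ) (h0 : (0 : ℝ) ∈ X)
    (hacc : (0 : ℝ) ∈ closure (X \ {0})) (x : ℝ) (hx : x ∈ X) (hx0 : x ≠ 0)
    (hiso : ∃ ε > 0, X ∩ Set.Ioo (x - ε) (x + ε) = {x}) :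
    ∃ δ > 0, ∀ y : lp (fun _ : ℕ => ℝ) 2, (∀ i, y i ∈ X) → ‖y‖ = |x| →
      ‖y - lp.single 2 0 x‖ < δ → y = lp.single 2 0 x := by
  obtain ⟨ε, hε, hset⟩ := hiso
  refine ⟨ε, hε, fun y hyX hynorm hlt => ?_⟩
  set s : lp (fun _ : ℕ => ℝ) 2 := lp.single 2 0 x with hs
  have h0s : s 0 = x := by simp [hs, lp.single_apply]
  have hcoord : |y 0 - x| < ε := by
    have h1 : ‖(y - s) 0‖ ≤ ‖y - s‖ :=
      lp.norm_apply_le_norm (by norm_num) (y - s) 0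
    have h2 : (y - s) 0 = y 0 - x := by
      simp [lp.coeFn_sub, h0s]
    rw [h2] at h1
    exact lt_of_le_of_lt h1 hlt
  have hy0 : y 0 = x := by
    have hmem : y 0 ∈ X ∩ Set.Ioo (x - ε) (x + ε) := by
      refine ⟨hyX 0, ?_, ?_⟩ <;> [linarith [abs_lt.mp hcoord]; linarith [abs_lt.mp hcoord]]
    rw [hset] at hmem
    exact hmem
  have hinner : (inner ℝ y s : ℝ) = x ^ 2 := by
    rw [hs, lp.inner_single_right, hy0]
    simp [sq]
  have hsnorm : ‖s‖ = |x| := by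
    rw [hs]
    simpa using lp.norm_single (p := 2) (by norm_num) (fun _ : ℕ => x) 0
  have hzero : ‖y - s‖ ^ 2 = 0 := by
    rw [norm_sub_sq_real, hynorm, hsnorm, hinner, sq_abs]
    ring
  have : y - s = 0 := by
    have := pow_eq_zero_iff (n := 2) (by norm_num) |>.mp hzero
    exact norm_eq_zero.mp this
  rw [hs] at this ⊢
  exact sub_eq_zero.mp this
end

section
/- Let S = {1/n : n ∈ ℕ, n ≥ 1} ∪ {0}. In the space H = {y ∈ E(S) : ‖y‖ = 1}, there is a non-trivial convergent sequence; in particular, H is not discrete. -/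
open Filter

noncomputable def gseq : ℕ → ℝ := fun i => (1/2 : ℝ)^(i/3 + 1)

lemma gseq_pos (i : ℕ) : 0 < gseq i := by unfold gseq; positivity

lemma gseq_sq (i : ℕ) : ‖gseq i‖ ^ (2:ℝ) = ((1:ℝ)/4)^(i/3+1) := by
  rw [Real.norm_eq_abs, abs_of_pos (gseq_pos i)]
  rw [show (2:ℝ) = ((2:ℕ):ℝ) by norm_num, Real.rpow_natCast]
  unfold gseq
  rw [← pow_mul, mul_comm, pow_mul]
  norm_num

lemma summable_q : Summable (fun i : ℕ => ((1:ℝ)/4)^(i/3+1)) := by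
  refine Summable.of_nonneg_of_le (fun i => by positivity) (fun i => ?_)
    (summable_geometric_of_lt_one (r := (3:ℝ)/4) (by norm_num) (by norm_num))
  calc ((1:ℝ)/4)^(i/3+1) ≤ (((3:ℝ)/4)^3)^(i/3+1) := by
        apply pow_le_pow_left₀ (by norm_num); norm_num
    _ = ((3:ℝ)/4)^(3*(i/3+1)) := by rw [← pow_mul]
    _ ≤ ((3:ℝ)/4)^i := by
        apply pow_le_pow_of_le_one (by norm_num) (by norm_num)
        omega

lemma tsum_q : ∑' i : ℕ, ((1:ℝ)/4)^(i/3+1) = 1 := by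
  have key : ∑' i : ℕ, ((1:ℝ)/4)^(i/3+1)
      = ∑' p : ℕ × Fin 3, ((1:ℝ)/4)^(p.1+1) :=
    Equiv.tsum_eq (Nat.divModEquiv 3) (fun p : ℕ × Fin 3 => ((1:ℝ)/4)^(p.1+1))
  rw [key]
  have hs : Summable (fun p : ℕ × Fin 3 => ((1:ℝ)/4)^(p.1+1)) := by
    rw [← (Nat.divModEquiv 3).summable_iff]
    exact summable_q
  rw [Summable.tsum_prod' hs (fun b => Summable.of_finite)]
  simp only [tsum_fintype]
  rw [show (fun b : ℕ => ∑ c : Fin 3, ((1:ℝ)/4)^(b+1)) = fun b : ℕ => 3 * (((1:ℝ)/4) * ((1:ℝ)/4)^b) by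
    funext b; rw [Finset.sum_const]; simp [pow_succ]; ring]
  rw [tsum_mul_left, tsum_mul_left, tsum_geometric_of_lt_one (by norm_num) (by norm_num)]
  norm_num

lemma two_toReal : (2:ENNReal).toReal = 2 := by norm_num

noncomputable def zz : lp (fun _ : ℕ => ℝ) 2 := ⟨gseq, by
  apply memℓp_gen
  rw [two_toReal]
  simpa only [gseq_sq] using summable_q⟩

lemma zz_apply (i : ℕ) : zz i = gseq i := rfl

noncomputable def cc (n : ℕ) : ℝ := (1/2:ℝ)^(n+2)

noncomputable def yy (n : ℕ) : lp (fun _ : ℕ => ℝ) 2 :=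
  zz + cc n • (lp.single 2 (3*n+3) (1:ℝ) - lp.single 2 (3*n) (1:ℝ))

lemma yy_apply (n i : ℕ) : yy n i = gseq (Equiv.swap (3*n) (3*n+3) i) := by
  have h0 : yy n i = gseq i + cc n *
      ((if i = 3*n+3 then (1:ℝ) else 0) - (if i = 3*n then (1:ℝ) else 0)) := by
    show zz i + cc n * (lp.single (E := fun _ : ℕ => ℝ) 2 (3*n+3) (1:ℝ) i - lp.single (E := fun _ : ℕ => ℝ) 2 (3*n) (1:ℝ) i) = _
    simp [yy, lp.single_apply, zz_apply, Pi.single_apply]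
  rw [h0]
  have h3 : (3*n)/3 = n := by omega
  have h4 : (3*n+3)/3 = n+1 := by omega
  rcases eq_or_ne i (3*n) with rfl | h1
  · rw [if_neg (by omega), if_pos rfl, Equiv.swap_apply_left]
    unfold gseq cc
    rw [h3, h4, show n+2 = (n+1)+1 from rfl, pow_succ]
    ring
  rcases eq_or_ne i (3*n+3) with rfl | h2
  · rw [if_pos rfl, if_neg h1, Equiv.swap_apply_right]
    unfold gseq cc
    rw [h3, h4, show n+2 = (n+1)+1 from rfl, pow_succ]
    ring
  · rw [if_neg h2, if_neg h1, Equiv.swap_apply_of_ne_of_ne h1 h2]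
    ring

lemma gseq_mem (j : ℕ) : ∃ m : ℕ, 1 ≤ m ∧ gseq j = 1/(m:ℝ) := by
  refine ⟨2^(j/3+1), Nat.one_le_two_pow, ?_⟩
  unfold gseq
  push_cast
  rw [div_pow, one_pow]

lemma norm_one_of (f : lp (fun _ : ℕ => ℝ) 2) (h : ∑' i, ‖f i‖ ^ (2:ℝ) = 1) :
    ‖f‖ = 1 := by
  rw [lp.norm_eq_tsum_rpow (by rw [two_toReal]; norm_num) f, two_toReal, h, Real.one_rpow]

lemma zz_norm : ‖zz‖ = 1 := by
  apply norm_one_of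
  simp only [zz_apply, gseq_sq]
  exact tsum_q

lemma yy_norm (n : ℕ) : ‖yy n‖ = 1 := by
  apply norm_one_of
  have : ∀ i, ‖yy n i‖ ^ (2:ℝ) = ‖gseq (Equiv.swap (3*n) (3*n+3) i)‖ ^ (2:ℝ) := by
    intro i; rw [yy_apply]
  rw [tsum_congr this,
    Equiv.tsum_eq (Equiv.swap (3*n) (3*n+3)) (fun i => ‖gseq i‖ ^ (2:ℝ))]
  simp only [gseq_sq]
  exact tsum_q

lemma yy_ne (n : ℕ) : yy n ≠ zz := by
  intro h
  have h2 : yy n (3*n) = zz (3*n) := by rw [h]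
  rw [yy_apply, Equiv.swap_apply_left, zz_apply] at h2
  unfold gseq at h2
  have h3 : (3*n)/3 = n := by omega
  have h4 : (3*n+3)/3 = n+1 := by omega
  rw [h3, h4, show n+2 = (n+1)+1 from rfl, pow_succ] at h2
  have hp : (0:ℝ) < (1/2:ℝ)^(n+1) := by positivity
  linarith

lemma yy_tend : Filter.Tendsto yy Filter.atTop (nhds zz) := by
  rw [tendsto_iff_norm_sub_tendsto_zero]
  apply squeeze_zero (g := fun n : ℕ => (1/2:ℝ)^n) (fun n => norm_nonneg _)
    (fun n => ?_) (tendsto_pow_atTop_nhds_zero_of_lt_one (by norm_num) (by norm_num))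
  have hd : yy n - zz = cc n • (lp.single 2 (3*n+3) (1:ℝ) - lp.single 2 (3*n) (1:ℝ)) := by
    unfold yy; exact add_sub_cancel_left _ _
  rw [hd, norm_smul]
  have hp2 : 0 < (2:ENNReal).toReal := by rw [two_toReal]; norm_num
  have hs : ∀ k : ℕ, ‖lp.single (E := fun _ : ℕ => ℝ) 2 k (1:ℝ)‖ = 1 := by
    intro k
    have := lp.norm_single (E := fun _ : ℕ => ℝ) (p := 2) (by norm_num) k (1:ℝ)
    simpa using this
  have hs1 := hs (3*n+3)
  have hs2 := hs (3*n)
  have hb : ‖lp.single (E := fun _ : ℕ => ℝ) 2 (3*n+3) (1:ℝ) - lp.single 2 (3*n) (1:ℝ)‖ ≤ 2 := by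
    refine le_trans (norm_sub_le _ _) ?_
    rw [hs1, hs2]; norm_num
  have hc : ‖cc n‖ = (1/2:ℝ)^(n+2) := by
    rw [Real.norm_eq_abs, abs_of_pos (by unfold cc; positivity)]; rfl
  refine le_trans (mul_le_mul_of_nonneg_left hb (norm_nonneg _)) ?_
  rw [hc, show n+2 = n+1+1 from rfl, pow_succ, pow_succ]
  nlinarith [pow_pos (show (0:ℝ) < 1/2 by norm_num) n]

theorem stmt_11 :
    ∃ (y : ℕ → lp (fun _ : ℕ => ℝ) 2) (z : lp (fun _ : ℕ => ℝ) 2),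
      (∀ n, (∀ i, y n i ∈ {t : ℝ | (∃ m : ℕ, 1 ≤ m ∧ t = 1 / (m : ℝ)) ∨ t = 0}) ∧ ‖y n‖ = 1) ∧
      ((∀ i, z i ∈ {t : ℝ | (∃ m : ℕ, 1 ≤ m ∧ t = 1 / (m : ℝ)) ∨ t = 0}) ∧ ‖z‖ = 1) ∧
      (∀ n, y n ≠ z) ∧
      Filter.Tendsto y Filter.atTop (nhds z) := by
  refine ⟨yy, zz, fun n => ⟨fun i => ?_, yy_norm n⟩, ⟨fun i => ?_, zz_norm⟩, yy_ne, yy_tend⟩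
  · rw [yy_apply]; exact Or.inl (gseq_mem _)
  · rw [zz_apply]; exact Or.inl (gseq_mem _)
end

section
/- Let M be a nonempty completely metrizable separable space without isolated points, and let (g_n) be a countable family of continuous real-valued functions on M such that for every countable C ⊆ ℝ the set M \ ⋃_n g_n⁻¹[C] is uncountable. Then there is a Cantor set K ⊆ M on which every g_n is injective. -/
open Metric Set

lemma exists_good (M : Type) [MetricSpace M] [TopologicalSpace.SeparableSpace M]
    (g : ℕ → M → ℝ)
    (huncount : ∀ C : Set ℝ, C.Countable → ¬ {x : M | ∀ n, g n x ∉ C}.Countable) :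
    ∃ P : Set M, P.Nonempty ∧ ∀ x ∈ P, ∀ U : Set M, IsOpen U → x ∈ U →
      ∀ C : Set ℝ, C.Countable → ∃ y, y ∈ P ∧ y ∈ U ∧ ∀ n, g n y ∉ C := by
  haveI : SecondCountableTopology M := UniformSpace.secondCountable_of_separable M
  classical
  set 𝒰 : Set (Set M) :=
    {U | IsOpen U ∧ ∃ C : Set ℝ, C.Countable ∧ {y ∈ U | ∀ n, g n y ∉ C}.Countable} with h𝒰
  obtain ⟨T, hTc, hTsub, hTU⟩ := TopologicalSpace.isOpen_sUnion_countable 𝒰 (fun U hU => hU.1)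
  have hC : ∀ U ∈ T, ∃ C : Set ℝ, C.Countable ∧ {y ∈ U | ∀ n, g n y ∉ C}.Countable := by
    intro U hU; exact (hTsub hU).2
  choose! C hCc hCcnt using hC
  set Cs : Set ℝ := ⋃ U ∈ T, C U with hCs
  have hCsc : Cs.Countable := Countable.biUnion hTc fun U hU => hCc U hU
  set Bad : Set M := ⋃₀ 𝒰 with hBad
  -- key : bad points avoiding a superset of Cs form a countable set
  have key : ∀ D : Set ℝ, Cs ⊆ D → {y ∈ Bad | ∀ n, g n y ∉ D}.Countable := by
    intro D hD
    have hsub : {y ∈ Bad | ∀ n, g n y ∉ D} ⊆ ⋃ U ∈ T, {y ∈ U | ∀ n, g n y ∉ C U} := by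
      rintro y ⟨hyB, hyD⟩
      have hyT : y ∈ ⋃₀ T := by rw [hTU]; exact hyB
      obtain ⟨U, hUT, hyU⟩ := hyT
      exact mem_biUnion hUT ⟨hyU, fun n hn => hyD n (hD (mem_biUnion hUT hn))⟩
    exact Countable.mono hsub (Countable.biUnion hTc fun U hU => hCcnt U hU)
  refine ⟨Badᶜ, ?_, ?_⟩
  · have h1 := huncount Cs hCsc
    have h2 := key Cs subset_rfl
    by_contra h
    rw [Set.not_nonempty_iff_eq_empty] at h
    apply h1
    have : {x : M | ∀ n, g n x ∉ Cs} ⊆ {y ∈ Bad | ∀ n, g n y ∉ Cs} := by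
      intro x hx
      refine ⟨?_, hx⟩
      by_contra hxB
      have : x ∈ Badᶜ := hxB
      rw [h] at this; exact this
    exact h2.mono this
  · intro x hx U hUo hxU D hDc
    have hnotbad : ¬ {y ∈ U | ∀ n, g n y ∉ D ∪ Cs}.Countable := by
      intro hcnt
      exact hx ⟨U, ⟨hUo, D ∪ Cs, hDc.union hCsc, hcnt⟩, hxU⟩
    have h2 := key (D ∪ Cs) subset_union_right
    have : ¬ ({y ∈ U | ∀ n, g n y ∉ D ∪ Cs} \ Bad) = ∅ := by
      intro hemp
      apply hnotbad
      have : {y ∈ U | ∀ n, g n y ∉ D ∪ Cs} ⊆ {y ∈ Bad | ∀ n, g n y ∉ D ∪ Cs} := by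
        intro y hy
        rcases (em (y ∈ Bad)) with h | h
        · exact ⟨h, hy.2⟩
        · exact absurd ⟨hy, h⟩ (Set.eq_empty_iff_forall_notMem.mp hemp y)
      exact h2.mono this
    obtain ⟨y, ⟨⟨hyU, hyD⟩, hyB⟩⟩ := Set.nonempty_iff_ne_empty.mpr this
    exact ⟨y, hyB, hyU, fun n hn => hyD n (Or.inl hn)⟩

section VD

variable {M : Type} [MetricSpace M] [CompleteSpace M] (g : ℕ → M → ℝ)

/-- Invariant for level `n` of the Cantor scheme. -/
def VDInv (P : Set M) (n : ℕ) (c : (Fin n → Bool) → M × ℝ) : Prop :=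
  (∀ s, (c s).1 ∈ P) ∧ (∀ s, 0 < (c s).2 ∧ (c s).2 ≤ (1/2 : ℝ)^n) ∧
  (∀ s t, s ≠ t → ∀ k < n, ∀ y ∈ Metric.closedBall (c s).1 (c s).2,
    ∀ z ∈ Metric.closedBall (c t).1 (c t).2, g k y ≠ g k z)

/-- Nesting between consecutive levels. -/
def VDLink (n : ℕ) (c : (Fin n → Bool) → M × ℝ) (c' : (Fin (n+1) → Bool) → M × ℝ) : Prop :=
  ∀ t : Fin (n+1) → Bool,
    Metric.closedBall (c' t).1 (c' t).2 ⊆ Metric.ball (c (Fin.init t)).1 (c (Fin.init t)).2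

variable (P : Set M)
variable (hP : ∀ x ∈ P, ∀ U : Set M, IsOpen U → x ∈ U →
      ∀ C : Set ℝ, C.Countable → ∃ y, y ∈ P ∧ y ∈ U ∧ ∀ n, g n y ∉ C)

include hP in
lemma vd_pick {ι : Type} [DecidableEq ι] (s : Finset ι) (x : ι → M) (U : ι → Set M)
    (hUo : ∀ i, IsOpen (U i)) (hx : ∀ i, x i ∈ P ∧ x i ∈ U i) :
    ∃ y : ι → M, (∀ i ∈ s, y i ∈ P ∧ y i ∈ U i) ∧
      (∀ i ∈ s, ∀ j ∈ s, i ≠ j → ∀ k k' : ℕ, g k (y i) ≠ g k' (y j)) := by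
  classical
  induction s using Finset.induction_on with
  | empty => exact ⟨x, by simp, by simp⟩
  | @insert a s ha ih =>
    obtain ⟨y, hy1, hy2⟩ := ih
    set C : Set ℝ := ⋃ j ∈ s, Set.range (fun k => g k (y j)) with hC
    have hCc : C.Countable :=
      Countable.biUnion s.countable_toSet (fun j _ => countable_range _)
    obtain ⟨z, hzP, hzU, hzav⟩ := hP (x a) (hx a).1 (U a) (hUo a) (hx a).2 C hCc
    refine ⟨Function.update y a z, ?_, ?_⟩
    · intro i hi
      rcases Finset.mem_insert.mp hi with rfl | hi
      · simpa using ⟨hzP, hzU⟩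
      · have hne : i ≠ a := fun h => ha (h ▸ hi)
        rw [Function.update_of_ne hne]
        exact hy1 i hi
    · intro i hi j hj hij k k'
      rcases Finset.mem_insert.mp hi with hia | hi' <;>
        rcases Finset.mem_insert.mp hj with hja | hj'
      · exact absurd (hia.trans hja.symm) hij
      · subst hia
        rw [Function.update_self,
          Function.update_of_ne (ne_of_mem_of_not_mem hj' ha)]
        intro heq
        exact hzav k (heq ▸ mem_biUnion hj' ⟨k', rfl⟩)
      · subst hja
        rw [Function.update_self,
          Function.update_of_ne (ne_of_mem_of_not_mem hi' ha)]
        intro heq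
        exact hzav k' (heq.symm ▸ mem_biUnion hi' ⟨k, rfl⟩)
      · rw [Function.update_of_ne (ne_of_mem_of_not_mem hi' ha),
          Function.update_of_ne (ne_of_mem_of_not_mem hj' ha)]
        exact hy2 i hi' j hj' hij k k'

/-- Uniform continuity of finitely many `g k` at a point. -/
lemma vd_delta (hg : ∀ n, Continuous (g n)) (y : M) (m : ℕ) {ε : ℝ} (hε : 0 < ε) :
    ∃ δ : ℝ, 0 < δ ∧ ∀ k ≤ m, ∀ z : M, dist z y ≤ δ → dist (g k z) (g k y) < ε := by
  induction m with
  | zero =>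
    obtain ⟨δ, hδ, h⟩ := Metric.continuous_iff.mp (hg 0) y ε hε
    exact ⟨δ/2, by linarith, fun k hk z hz => by
      interval_cases k
      exact h z (lt_of_le_of_lt hz (by linarith))⟩
  | succ m ih =>
    obtain ⟨δ₁, hδ₁, h₁⟩ := ih
    obtain ⟨δ₂, hδ₂, h₂⟩ := Metric.continuous_iff.mp (hg (m+1)) y ε hε
    refine ⟨min δ₁ (δ₂/2), by positivity, fun k hk z hz => ?_⟩
    rcases Nat.lt_succ_iff_lt_or_eq.mp (Nat.lt_succ_of_le hk) with h | h
    · exact h₁ k (Nat.lt_succ_iff.mp h) z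
        (le_trans hz (min_le_left _ _))
    · subst h
      exact h₂ z (lt_of_le_of_lt (le_trans hz (min_le_right _ _)) (by linarith))

include hP in
lemma vd_step (hg : ∀ n, Continuous (g n)) (n : ℕ) (c : (Fin n → Bool) → M × ℝ)
    (hc : VDInv g P n c) : ∃ c', VDInv g P (n+1) c' ∧ VDLink n c c' := by
  classical
  obtain ⟨hcP, hcr, _⟩ := hc
  obtain ⟨y, hy1, hy2⟩ := vd_pick g P hP (Finset.univ : Finset (Fin (n+1) → Bool))
    (fun t => (c (Fin.init t)).1)
    (fun t => Metric.ball (c (Fin.init t)).1 (c (Fin.init t)).2)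
    (fun t => isOpen_ball)
    (fun t => ⟨hcP _, mem_ball_self (hcr _).1⟩)
  have hy1' : ∀ t, y t ∈ P ∧ y t ∈ Metric.ball (c (Fin.init t)).1 (c (Fin.init t)).2 :=
    fun t => hy1 t (Finset.mem_univ t)
  have hy2' : ∀ t t', t ≠ t' → ∀ k, g k (y t) ≠ g k (y t') :=
    fun t t' h k => hy2 t (Finset.mem_univ t) t' (Finset.mem_univ t') h k k
  set A : Finset ℝ :=
    Finset.image (fun p : ℕ × ((Fin (n+1) → Bool) × (Fin (n+1) → Bool)) =>
      |g p.1 (y p.2.1) - g p.1 (y p.2.2)|)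
    ((Finset.range (n+1)) ×ˢ Finset.univ.offDiag) with hA
  have hAne : A.Nonempty := by
    refine Finset.image_nonempty.mpr (Finset.Nonempty.product
      ⟨0, Finset.mem_range.mpr (Nat.succ_pos n)⟩ ?_)
    refine ⟨((fun _ => true), (fun _ => false)), Finset.mem_offDiag.mpr
      ⟨Finset.mem_univ _, Finset.mem_univ _, fun h => ?_⟩⟩
    simpa using congrFun h 0
  set m := A.min' hAne with hmdef
  have hm0 : 0 < m := by
    obtain ⟨p, hp, hpm⟩ := Finset.mem_image.mp (A.min'_mem hAne)
    have hne : p.2.1 ≠ p.2.2 :=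
      (Finset.mem_offDiag.mp (Finset.mem_product.mp hp).2).2.2
    rw [hmdef, ← hpm]
    exact abs_pos.mpr (sub_ne_zero.mpr (hy2' _ _ hne p.1))
  have hmle : ∀ k ≤ n, ∀ t t', t ≠ t' → m ≤ |g k (y t) - g k (y t')| := by
    intro k hk t t' htt
    refine Finset.min'_le A _ (Finset.mem_image.mpr ⟨(k, (t, t')), ?_, rfl⟩)
    exact Finset.mem_product.mpr ⟨Finset.mem_range.mpr (Nat.lt_succ_of_le hk),
      Finset.mem_offDiag.mpr ⟨Finset.mem_univ _, Finset.mem_univ _, htt⟩⟩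
  have hδex := fun t => vd_delta g hg (y t) n (by positivity : (0:ℝ) < m/3)
  choose δ hδ0 hδ using hδex
  set ρ : (Fin (n+1) → Bool) → ℝ :=
    fun t => ((c (Fin.init t)).2 - dist (y t) (c (Fin.init t)).1)/2 with hρ
  have hρ0 : ∀ t, 0 < ρ t := by
    intro t
    have := mem_ball.mp (hy1' t).2
    simp only [hρ]
    linarith
  set rad : (Fin (n+1) → Bool) → ℝ :=
    fun t => min (min (δ t) (ρ t)) ((1/2 : ℝ)^(n+1)) with hrad
  have hrad0 : ∀ t, 0 < rad t := fun t => lt_min (lt_min (hδ0 t) (hρ0 t)) (by positivity)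
  refine ⟨fun t => (y t, rad t), ⟨fun t => (hy1' t).1,
    fun t => ⟨hrad0 t, min_le_right _ _⟩, ?_⟩, ?_⟩
  · -- separation
    intro s t hst k hk z hz w hw
    have hks : k ≤ n := Nat.lt_succ_iff.mp hk
    have h1 : dist (g k z) (g k (y s)) < m/3 :=
      hδ s k hks z (le_trans (mem_closedBall.mp hz)
        (le_trans (min_le_left _ _) (min_le_left _ _)))
    have h2 : dist (g k w) (g k (y t)) < m/3 :=
      hδ t k hks w (le_trans (mem_closedBall.mp hw)
        (le_trans (min_le_left _ _) (min_le_left _ _)))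
    have h3 : m ≤ dist (g k (y s)) (g k (y t)) := by
      rw [Real.dist_eq]; exact hmle k hks s t hst
    intro heq
    have h4 : dist (g k (y s)) (g k (y t)) ≤
        dist (g k (y s)) (g k z) + dist (g k z) (g k w) + dist (g k w) (g k (y t)) :=
      dist_triangle4 _ _ _ _
    have h5 : dist (g k z) (g k w) = 0 := by rw [heq, dist_self]
    have h1' : dist (g k (y s)) (g k z) < m/3 := by rw [dist_comm]; exact h1
    linarith
  · -- link
    intro t z hz
    have hd := mem_ball.mp (hy1' t).2
    have h1 : dist z (y t) ≤ ρ t :=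
      le_trans (mem_closedBall.mp hz) (le_trans (min_le_left _ _) (min_le_right _ _))
    have h2 : dist z (c (Fin.init t)).1 ≤ dist z (y t) + dist (y t) (c (Fin.init t)).1 :=
      dist_triangle _ _ _
    rw [mem_ball]
    simp only [hρ] at h1
    linarith

include hP in
lemma vd_main (hg : ∀ n, Continuous (g n)) (hP0 : P.Nonempty) :
    ∃ K : Set M, Nonempty (K ≃ₜ (ℕ → Bool)) ∧ ∀ n, Set.InjOn (g n) K := by
  classical
  obtain ⟨x0, hx0⟩ := hP0
  have h0 : VDInv g P 0 (fun _ => (x0, 1)) :=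
    ⟨fun _ => hx0, fun _ => ⟨one_pos, by norm_num⟩,
      fun s t hst => absurd (Subsingleton.elim s t) hst⟩
  have hstep := vd_step g P hP hg
  choose next hnext1 hnext2 using hstep
  let F : ∀ n, {c : (Fin n → Bool) → M × ℝ // VDInv g P n c} :=
    fun n => Nat.rec ⟨fun _ => (x0, 1), h0⟩
      (fun n p => ⟨next n p.1 p.2, hnext1 n p.1 p.2⟩) n
  have hFlink : ∀ n, VDLink n (F n).1 (F (n+1)).1 := fun n => hnext2 n (F n).1 (F n).2
  have hrad : ∀ n s, 0 < ((F n).1 s).2 ∧ ((F n).1 s).2 ≤ (1/2 : ℝ)^n :=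
    fun n s => (F n).2.2.1 s
  have hsep : ∀ n, ∀ s t : Fin n → Bool, s ≠ t → ∀ k < n,
      ∀ y ∈ Metric.closedBall ((F n).1 s).1 ((F n).1 s).2,
      ∀ z ∈ Metric.closedBall ((F n).1 t).1 ((F n).1 t).2, g k y ≠ g k z :=
    fun n => (F n).2.2.2
  let res : (ℕ → Bool) → ∀ n, Fin n → Bool := fun σ n i => σ i
  have hres : ∀ σ n, Fin.init (res σ (n+1)) = res σ n := by
    intro σ n; funext i
    simp [Fin.init, res]
  have hnest : ∀ σ n,
      Metric.closedBall ((F (n+1)).1 (res σ (n+1))).1 ((F (n+1)).1 (res σ (n+1))).2 ⊆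
      Metric.ball ((F n).1 (res σ n)).1 ((F n).1 (res σ n)).2 := by
    intro σ n
    have h := hFlink n (res σ (n+1))
    rwa [hres σ n] at h
  have hmono : ∀ σ n m, n ≤ m →
      Metric.closedBall ((F m).1 (res σ m)).1 ((F m).1 (res σ m)).2 ⊆
      Metric.closedBall ((F n).1 (res σ n)).1 ((F n).1 (res σ n)).2 := by
    intro σ n m h
    induction h with
    | refl => exact subset_rfl
    | step h ih => exact subset_trans ((hnest σ _).trans ball_subset_closedBall) ih
  let u : (ℕ → Bool) → ℕ → M := fun σ n => ((F n).1 (res σ n)).1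
  have hcauchy : ∀ σ, CauchySeq (u σ) := by
    intro σ
    refine cauchySeq_of_le_geometric (1/2) 1 (by norm_num) (fun n => ?_)
    have h1 : u σ (n+1) ∈ Metric.ball ((F n).1 (res σ n)).1 ((F n).1 (res σ n)).2 :=
      hnest σ n (Metric.mem_closedBall_self (hrad (n+1) _).1.le)
    rw [dist_comm]
    calc dist (u σ (n+1)) (u σ n) ≤ ((F n).1 (res σ n)).2 := (Metric.mem_ball.mp h1).le
    _ ≤ (1/2 : ℝ)^n := (hrad n _).2
    _ = 1 * (1/2 : ℝ)^n := (one_mul _).symm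
  have hlim : ∀ σ, ∃ x, Filter.Tendsto (u σ) Filter.atTop (nhds x) :=
    fun σ => cauchySeq_tendsto_of_complete (hcauchy σ)
  choose f hf using hlim
  have hmem : ∀ σ n, f σ ∈ Metric.closedBall ((F n).1 (res σ n)).1 ((F n).1 (res σ n)).2 := by
    intro σ n
    refine Metric.isClosed_closedBall.mem_of_tendsto (hf σ) ?_
    refine Filter.eventually_atTop.mpr ⟨n, fun m hm => ?_⟩
    exact hmono σ n m hm (Metric.mem_closedBall_self (hrad m _).1.le)
  have hsep' : ∀ σ τ : ℕ → Bool, (∃ i, σ i ≠ τ i) → ∀ k, g k (f σ) ≠ g k (f τ) := by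
    rintro σ τ ⟨i, hi⟩ k
    set N := max (i+1) (k+1) with hN
    have hiN : i < N := lt_of_lt_of_le (Nat.lt_succ_self i) (le_max_left _ _)
    have hkN : k < N := lt_of_lt_of_le (Nat.lt_succ_self k) (le_max_right _ _)
    have hne : res σ N ≠ res τ N := fun h => hi (congrFun h ⟨i, hiN⟩)
    exact hsep N _ _ hne k hkN (f σ) (hmem σ N) (f τ) (hmem τ N)
  have hfinj : Function.Injective f := by
    intro σ τ h
    by_contra hne
    obtain ⟨i, hi⟩ := Function.ne_iff.mp hne
    exact hsep' σ τ ⟨i, hi⟩ 0 (by rw [h])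
  have hfcont : Continuous f := by
    refine continuous_iff_continuousAt.mpr fun σ => ?_
    rw [ContinuousAt, Metric.tendsto_nhds]
    intro ε hε
    obtain ⟨n, hn⟩ := exists_pow_lt_of_lt_one (half_pos hε) (by norm_num : (1/2:ℝ) < 1)
    have hev : ∀ᶠ τ in nhds σ, ∀ i ∈ Finset.range n, τ i = σ i := by
      rw [Filter.eventually_all_finset]
      intro i _
      have hop : IsOpen {τ : ℕ → Bool | τ i = σ i} := by
        have := (continuous_apply (A := fun _ : ℕ => Bool) i).isOpen_preimage {σ i}
          (isOpen_discrete _)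
        simpa [Set.preimage] using this
      exact hop.mem_nhds rfl
    filter_upwards [hev] with τ hτ
    have hResEq : res τ n = res σ n :=
      funext fun i => hτ i (Finset.mem_range.mpr i.2)
    have h1 := hmem τ n
    rw [hResEq] at h1
    have h2 := hmem σ n
    have hr2 := (hrad n (res σ n)).2
    calc dist (f τ) (f σ)
        ≤ dist (f τ) ((F n).1 (res σ n)).1 + dist ((F n).1 (res σ n)).1 (f σ) :=
          dist_triangle _ _ _
      _ ≤ ((F n).1 (res σ n)).2 + ((F n).1 (res σ n)).2 := by
          have := Metric.mem_closedBall.mp h1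
          have := Metric.mem_closedBall.mp h2
          rw [dist_comm ((F n).1 (res σ n)).1 (f σ)]
          gcongr <;> assumption
      _ ≤ (1/2 : ℝ)^n + (1/2 : ℝ)^n := by gcongr
      _ < ε/2 + ε/2 := by gcongr
      _ = ε := by ring
  refine ⟨Set.range f, ?_, ?_⟩
  · have hemb := hfcont.isClosedEmbedding hfinj
    exact ⟨(hemb.toIsEmbedding.toHomeomorph).symm⟩
  · intro k x hx y hy hxy
    obtain ⟨σ, rfl⟩ := hx
    obtain ⟨τ, rfl⟩ := hy
    by_contra hne
    have hστ : σ ≠ τ := fun h => hne (congrArg f h)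
    obtain ⟨i, hi⟩ := Function.ne_iff.mp hστ
    exact hsep' σ τ ⟨i, hi⟩ k hxy

end VD

theorem stmt_18 (M : Type) [MetricSpace M] [CompleteSpace M]
    [TopologicalSpace.SeparableSpace M] [Nonempty M]
    (hperf : ∀ x : M, ¬ IsOpen ({x} : Set M))
    (g : ℕ → M → ℝ) (hg : ∀ n, Continuous (g n))
    (huncount : ∀ C : Set ℝ, C.Countable → ¬ {x : M | ∀ n, g n x ∉ C}.Countable) :
    ∃ K : Set M, Nonempty (K ≃ₜ (ℕ → Bool)) ∧ ∀ n, Set.InjOn (g n) K := by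
  obtain ⟨P, hP0, hP⟩ := exists_good M g huncount
  exact vd_main g P hP hg hP0
end
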